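/- A finite set system (X, F) is well-graded with VC-dimension at most 1 if and only if it is well-graded with additionality 1, i.e., |F| = |ess_F(X)| + 1. -/

import Mathlib

/-- The one-inclusion graph of a set system. -/
def oneInclusion {α : Type*} [DecidableEq α] (F : Finset (Finset α)) :
    SimpleGraph {A : Finset α // A ∈ F} where
  Adj A B := (symmDiff A.1 B.1).card = 1
  symm := by
    constructor
    intro A B h
    rwa [symmDiff_comm] at h
  loopless := by
    constructor
    intro A h
    simp [symmDiff_self] at h

/-- A set system is well-graded if the Hamming distance between any two members
equals their distance in the one-inclusion graph. -/
def WellGraded {α : Type*} [DecidableEq α] (F : Finset (Finset α)) : Prop :=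
  ∀ A B : {A : Finset α // A ∈ F},
    (oneInclusion F).dist A B = (symmDiff A.1 B.1).card

/-- The set of essential elements of the domain. -/
def essSet {α : Type*} [DecidableEq α] [Fintype α] (F : Finset (Finset α)) :
    Finset α :=
  Finset.univ.filter (fun x => (∃ A ∈ F, x ∈ A) ∧ ∃ B ∈ F, x ∉ B)

/-- The VC-dimension of a finite set system: the largest size of a shattered
subset. -/
def vcDim {α : Type*} [DecidableEq α] (F : Finset (Finset α)) : ℕ :=
  F.shatterer.sup Finset.card

section Aux

variable {α : Type*} [DecidableEq α] {F : Finset (Finset α)}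

lemma wg_reachable (hwg : WellGraded F) (A B : {A : Finset α // A ∈ F}) :
    (oneInclusion F).Reachable A B := by
  by_cases h : A = B
  · exact h ▸ SimpleGraph.Reachable.refl A
  · apply SimpleGraph.Reachable.of_dist_ne_zero
    rw [hwg]
    simp only [ne_eq, Finset.card_eq_zero, ← Finset.bot_eq_empty, symmDiff_eq_bot]
    exact fun he => h (Subtype.ext he)

lemma exists_parent (hwg : WellGraded F) (A0 A : {A : Finset α // A ∈ F}) (hA : A ≠ A0) :
    ∃ C : {A : Finset α // A ∈ F}, (symmDiff A.1 C.1).card = 1 ∧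
      (oneInclusion F).dist C A0 + 1 = (oneInclusion F).dist A A0 := by
  have hr := wg_reachable hwg A A0
  have hpos : 0 < (oneInclusion F).dist A A0 := hr.pos_dist_of_ne hA
  obtain ⟨p, hp⟩ := hr.exists_walk_length_eq_dist
  cases p with
  | nil => simp at hp; exact absurd rfl hA
  | @cons _ C _ hadj q =>
    refine ⟨C, hadj, ?_⟩
    have h1 : (oneInclusion F).dist C A0 ≤ q.length := SimpleGraph.dist_le q
    obtain ⟨r, hrlen⟩ := (wg_reachable hwg C A0).exists_walk_length_eq_dist
    have h2 : (oneInclusion F).dist A A0 ≤ (SimpleGraph.Walk.cons hadj r).length :=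
      SimpleGraph.dist_le _
    simp only [SimpleGraph.Walk.length_cons] at hp h2
    omega

end Aux

section Aux2

variable {α : Type*} [DecidableEq α] {F : Finset (Finset α)}

lemma symmDiff_eq_singleton_cases {s t : Finset α} {z : α} (h : symmDiff s t = {z}) :
    (z ∉ t ∧ s = insert z t) ∨ (z ∉ s ∧ t = insert z s) := by
  have hz : z ∈ symmDiff s t := h ▸ Finset.mem_singleton_self z
  have hmem : ∀ a, a ∈ symmDiff s t ↔ a = z := by
    intro a; rw [h, Finset.mem_singleton]
  rw [Finset.mem_symmDiff] at hz
  rcases hz with ⟨h1, h2⟩ | ⟨h1, h2⟩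
  · left
    refine ⟨h2, ?_⟩
    ext a
    simp only [Finset.mem_insert]
    by_cases haz : a = z
    · subst haz; tauto
    · have ha := hmem a
      rw [Finset.mem_symmDiff] at ha
      tauto
  · right
    refine ⟨h2, ?_⟩
    ext a
    simp only [Finset.mem_insert]
    by_cases haz : a = z
    · subst haz; tauto
    · have ha := hmem a
      rw [Finset.mem_symmDiff] at ha
      tauto

variable [Fintype α]

lemma label_mem_ess {A B : {A : Finset α // A ∈ F}} {x : α}
    (hx : x ∈ symmDiff A.1 B.1) : x ∈ essSet F := by
  rw [Finset.mem_symmDiff] at hx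
  simp only [essSet, Finset.mem_filter, Finset.mem_univ, true_and]
  rcases hx with ⟨h1, h2⟩ | ⟨h1, h2⟩
  · exact ⟨⟨A.1, A.2, h1⟩, ⟨B.1, B.2, h2⟩⟩
  · exact ⟨⟨B.1, B.2, h1⟩, ⟨A.1, A.2, h2⟩⟩

lemma exists_label_edge (hwg : WellGraded F) (A0 : {A : Finset α // A ∈ F})
    (c : {A : Finset α // A ∈ F} → {A : Finset α // A ∈ F})
    (hc1 : ∀ A, A ≠ A0 → (symmDiff A.1 (c A).1).card = 1)
    (hc2 : ∀ A, A ≠ A0 →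
      (oneInclusion F).dist (c A) A0 + 1 = (oneInclusion F).dist A A0)
    {x : α} (hx : x ∈ essSet F) :
    ∃ A, A ≠ A0 ∧ symmDiff A.1 (c A).1 = {x} := by
  classical
  simp only [essSet, Finset.mem_filter, Finset.mem_univ, true_and] at hx
  obtain ⟨⟨A1, hA1, hxA1⟩, ⟨B1, hB1, hxB1⟩⟩ := hx
  have hS : (Finset.univ.filter
      (fun A : {A : Finset α // A ∈ F} => x ∈ symmDiff A.1 A0.1)).Nonempty := by
    by_cases h0 : x ∈ A0.1
    · exact ⟨⟨B1, hB1⟩, by simp [Finset.mem_symmDiff, hxB1, h0]⟩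
    · exact ⟨⟨A1, hA1⟩, by simp [Finset.mem_symmDiff, hxA1, h0]⟩
  obtain ⟨A, hAS, hmin⟩ := Finset.exists_min_image _
    (fun A => (oneInclusion F).dist A A0) hS
  rw [Finset.mem_filter] at hAS
  have hxA : x ∈ symmDiff A.1 A0.1 := hAS.2
  have hA0 : A ≠ A0 := by
    rintro rfl
    simp [Finset.mem_symmDiff] at hxA
  obtain ⟨z, hz⟩ := Finset.card_eq_one.mp (hc1 A hA0)
  have hzx : z = x := by
    by_contra hne
    have hxAC : x ∉ symmDiff A.1 (c A).1 := by
      rw [hz, Finset.mem_singleton]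
      exact fun h => hne h.symm
    have hxC : x ∈ symmDiff (c A).1 A0.1 := by
      rw [Finset.mem_symmDiff] at hxA hxAC ⊢
      tauto
    have hle := hmin (c A) (by simp [Finset.mem_filter, hxC])
    have := hc2 A hA0
    omega
  exact ⟨A, hA0, by rw [hz, hzx]⟩

lemma g_exists (hwg : WellGraded F) (A0 : {A : Finset α // A ∈ F})
    (c : {A : Finset α // A ∈ F} → {A : Finset α // A ∈ F})
    (hc1 : ∀ A, A ≠ A0 → (symmDiff A.1 (c A).1).card = 1)
    (hc2 : ∀ A, A ≠ A0 →
      (oneInclusion F).dist (c A) A0 + 1 = (oneInclusion F).dist A A0) :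
    ∃ g : α → {A : Finset α // A ∈ F},
      ∀ x ∈ essSet F, g x ≠ A0 ∧ symmDiff (g x).1 (c (g x)).1 = {x} := by
  classical
  refine ⟨fun x => if h : ∃ A, A ≠ A0 ∧ symmDiff A.1 (c A).1 = {x}
    then h.choose else A0, ?_⟩
  intro x hx
  have h := exists_label_edge hwg A0 c hc1 hc2 hx
  simp only [dif_pos h]
  exact h.choose_spec

lemma card_lower (hwg : WellGraded F) (hF : F.Nonempty)
    (A0 : {A : Finset α // A ∈ F})
    (c : {A : Finset α // A ∈ F} → {A : Finset α // A ∈ F})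
    (hc1 : ∀ A, A ≠ A0 → (symmDiff A.1 (c A).1).card = 1)
    (hc2 : ∀ A, A ≠ A0 →
      (oneInclusion F).dist (c A) A0 + 1 = (oneInclusion F).dist A A0) :
    (essSet F).card + 1 ≤ F.card := by
  classical
  obtain ⟨g, hgp⟩ := g_exists hwg A0 c hc1 hc2
  have hcard : (essSet F).card ≤ (Finset.univ.erase A0).card := by
    apply Finset.card_le_card_of_injOn g
    · intro x hx
      exact Finset.mem_erase.2 ⟨(hgp x hx).1, Finset.mem_univ _⟩
    · intro x hx y hy hxy
      have h1 := (hgp x (Finset.mem_coe.1 hx)).2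
      have h2 := (hgp y (Finset.mem_coe.1 hy)).2
      rw [hxy, h2] at h1
      exact (Finset.singleton_injective h1).symm
  have herase : (Finset.univ.erase A0).card = F.card - 1 := by
    rw [Finset.card_erase_of_mem (Finset.mem_univ _), Finset.card_univ, Fintype.card_coe]
  have hF1 : 1 ≤ F.card := Finset.card_pos.mpr hF
  omega

lemma card_upper (hF : F.Nonempty) (A0 : {A : Finset α // A ∈ F})
    (c : {A : Finset α // A ∈ F} → {A : Finset α // A ∈ F})
    (hc1 : ∀ A, A ≠ A0 → (symmDiff A.1 (c A).1).card = 1)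
    (hinj : ∀ A B, A ≠ A0 → B ≠ A0 →
      symmDiff A.1 (c A).1 = symmDiff B.1 (c B).1 → A = B) :
    F.card ≤ (essSet F).card + 1 := by
  classical
  have hcard : (Finset.univ.erase A0).card ≤
      ((essSet F).image (fun x => ({x} : Finset α))).card := by
    apply Finset.card_le_card_of_injOn (fun A => symmDiff A.1 (c A).1)
    · intro A hA
      have hA' : A ≠ A0 := (Finset.mem_erase.1 hA).1
      obtain ⟨z, hz⟩ := Finset.card_eq_one.mp (hc1 A hA')
      have hzm : z ∈ symmDiff A.1 (c A).1 := hz ▸ Finset.mem_singleton_self z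
      simp only [hz]
      exact Finset.mem_image_of_mem _ (label_mem_ess hzm)
    · intro A hA B hB h
      exact hinj A B (Finset.mem_erase.1 (Finset.mem_coe.1 hA)).1
        (Finset.mem_erase.1 (Finset.mem_coe.1 hB)).1 h
  rw [Finset.card_image_of_injective _ Finset.singleton_injective] at hcard
  have herase : (Finset.univ.erase A0).card = F.card - 1 := by
    rw [Finset.card_erase_of_mem (Finset.mem_univ _), Finset.card_univ, Fintype.card_coe]
  have hF1 : 1 ≤ F.card := Finset.card_pos.mpr hF
  omega

end Aux2

section Aux3

variable {α : Type*} [DecidableEq α] {F : Finset (Finset α)}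

lemma shatters_pair_of_edges {P Q P' Q' : Finset α}
    (hP : P ∈ F) (hQ : Q ∈ F) (hP' : P' ∈ F) (hQ' : Q' ∈ F) {z y : α}
    (hzP : z ∉ P) (hzP' : z ∉ P') (hQe : Q = insert z P) (hQ'e : Q' = insert z P')
    (hyP : y ∈ P) (hyP' : y ∉ P') :
    F.Shatters {z, y} := by
  have hyz : y ≠ z := fun h => hzP (h ▸ hyP)
  have hzQ : z ∈ Q := hQe ▸ Finset.mem_insert_self z P
  have hzQ' : z ∈ Q' := hQ'e ▸ Finset.mem_insert_self z P'
  have hyQ : y ∈ Q := hQe ▸ Finset.mem_insert_of_mem hyP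
  have hyQ' : y ∉ Q' := by
    rw [hQ'e, Finset.mem_insert]
    rintro (h | h)
    · exact hyz h
    · exact hyP' h
  intro t ht
  by_cases hz : z ∈ t <;> by_cases hy : y ∈ t
  · refine ⟨Q, hQ, ?_⟩
    have h1 : t = {z, y} := by
      apply Finset.Subset.antisymm ht
      intro a ha
      rw [Finset.mem_insert, Finset.mem_singleton] at ha
      rcases ha with rfl | rfl <;> assumption
    rw [h1]
    ext a
    simp only [Finset.mem_inter, Finset.mem_insert, Finset.mem_singleton]
    constructor
    · tauto
    · rintro (rfl | rfl) <;> simp_all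
  · refine ⟨Q', hQ', ?_⟩
    have h1 : t = {z} := by
      ext a
      rw [Finset.mem_singleton]
      constructor
      · intro ha
        have := ht ha
        rw [Finset.mem_insert, Finset.mem_singleton] at this
        rcases this with rfl | rfl
        · rfl
        · exact absurd ha hy
      · rintro rfl; exact hz
    rw [h1]
    ext a
    simp only [Finset.mem_inter, Finset.mem_insert, Finset.mem_singleton]
    constructor
    · rintro ⟨rfl | rfl, h2⟩
      · rfl
      · exact absurd h2 hyQ'
    · rintro rfl; exact ⟨Or.inl rfl, hzQ'⟩
  · refine ⟨P, hP, ?_⟩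
    have h1 : t = {y} := by
      ext a
      rw [Finset.mem_singleton]
      constructor
      · intro ha
        have := ht ha
        rw [Finset.mem_insert, Finset.mem_singleton] at this
        rcases this with rfl | rfl
        · exact absurd ha hz
        · rfl
      · rintro rfl; exact hy
    rw [h1]
    ext a
    simp only [Finset.mem_inter, Finset.mem_insert, Finset.mem_singleton]
    constructor
    · rintro ⟨rfl | rfl, h2⟩
      · exact absurd h2 hzP
      · rfl
    · rintro rfl; exact ⟨Or.inr rfl, hyP⟩
  · refine ⟨P', hP', ?_⟩
    have h1 : t = ∅ := by
      ext a
      simp only [Finset.notMem_empty, iff_false]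
      intro ha
      have := ht ha
      rw [Finset.mem_insert, Finset.mem_singleton] at this
      rcases this with rfl | rfl
      · exact hz ha
      · exact hy ha
    rw [h1]
    ext a
    simp only [Finset.mem_inter, Finset.mem_insert, Finset.mem_singleton,
      Finset.notMem_empty, iff_false]
    rintro ⟨rfl | rfl, h2⟩
    · exact hzP' h2
    · exact hyP' h2

lemma label_unique_of_vc (hvc : vcDim F ≤ 1) {P Q P' Q' : Finset α}
    (hP : P ∈ F) (hQ : Q ∈ F) (hP' : P' ∈ F) (hQ' : Q' ∈ F) {z : α}
    (hzP : z ∉ P) (hzP' : z ∉ P') (hQe : Q = insert z P) (hQ'e : Q' = insert z P') :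
    P = P' := by
  by_contra hne
  have hsd : (symmDiff P P').Nonempty := by
    rw [Finset.nonempty_iff_ne_empty, ← Finset.bot_eq_empty, ne_eq, symmDiff_eq_bot]
    exact hne
  obtain ⟨y, hy⟩ := hsd
  rw [Finset.mem_symmDiff] at hy
  have hshat : F.Shatters {z, y} := by
    rcases hy with ⟨h1, h2⟩ | ⟨h1, h2⟩
    · exact shatters_pair_of_edges hP hQ hP' hQ' hzP hzP' hQe hQ'e h1 h2
    · exact shatters_pair_of_edges hP' hQ' hP hQ hzP' hzP hQ'e hQe h1 h2
  have hyz : y ≠ z := by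
    rintro rfl; rcases hy with ⟨h1, _⟩ | ⟨h1, _⟩
    · exact hzP h1
    · exact hzP' h1
  have hmem : ({z, y} : Finset α) ∈ F.shatterer := Finset.mem_shatterer.2 hshat
  have hle : ({z, y} : Finset α).card ≤ vcDim F := Finset.le_sup hmem
  rw [Finset.card_insert_of_notMem (by simpa using hyz.symm), Finset.card_singleton] at hle
  omega

lemma inj_of_vc (hvc : vcDim F ≤ 1) (A0 : {A : Finset α // A ∈ F})
    (c : {A : Finset α // A ∈ F} → {A : Finset α // A ∈ F})
    (hc1 : ∀ A, A ≠ A0 → (symmDiff A.1 (c A).1).card = 1)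
    (hc2 : ∀ A, A ≠ A0 →
      (oneInclusion F).dist (c A) A0 + 1 = (oneInclusion F).dist A A0) :
    ∀ A B, A ≠ A0 → B ≠ A0 →
      symmDiff A.1 (c A).1 = symmDiff B.1 (c B).1 → A = B := by
  intro A B hA hB hAB
  obtain ⟨z, hzA⟩ := Finset.card_eq_one.mp (hc1 A hA)
  have hzB : symmDiff B.1 (c B).1 = {z} := by rw [← hAB, hzA]
  rcases symmDiff_eq_singleton_cases hzA with ⟨h1, h2⟩ | ⟨h1, h2⟩ <;>
    rcases symmDiff_eq_singleton_cases hzB with ⟨h1', h2'⟩ | ⟨h1', h2'⟩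
  · -- A = insert z (c A), B = insert z (c B)
    have := label_unique_of_vc hvc (c A).2 A.2 (c B).2 B.2 h1 h1' h2 h2'
    apply Subtype.ext
    rw [h2, h2', this]
  · -- A = insert z (c A), (c B) = insert z B : c A = B, A = c B
    exfalso
    have e1 : (c A).1 = B.1 := label_unique_of_vc hvc (c A).2 A.2 B.2 (c B).2 h1 h1' h2 h2'
    have e2 : A = c B := by
      apply Subtype.ext
      rw [h2, e1, ← h2']
    have e1' : c A = B := Subtype.ext e1
    have d1 := hc2 A hA
    have d2 := hc2 B hB
    rw [e1'] at d1
    rw [← e2] at d2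
    omega
  · exfalso
    have e1 : A.1 = (c B).1 := label_unique_of_vc hvc A.2 (c A).2 (c B).2 B.2 h1 h1' h2 h2'
    have e2 : c A = B := by
      apply Subtype.ext
      rw [h2, e1, ← h2']
    have e1' : A = c B := Subtype.ext e1
    have d1 := hc2 A hA
    have d2 := hc2 B hB
    rw [e2] at d1
    rw [← e1'] at d2
    omega
  · exact Subtype.ext (label_unique_of_vc hvc A.2 (c A).2 B.2 (c B).2 h1 h1' h2 h2')

end Aux3

section Aux4

variable {α : Type*} [DecidableEq α] {F : Finset (Finset α)}

/-- The parent-orbit relation: `B` is reachable from `A` by iterating `c`. -/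
def orbTo (A0 : {A : Finset α // A ∈ F})
    (c : {A : Finset α // A ∈ F} → {A : Finset α // A ∈ F}) :
    {A : Finset α // A ∈ F} → {A : Finset α // A ∈ F} → Prop :=
  Relation.ReflTransGen (fun A B => A ≠ A0 ∧ B = c A)

lemma orbTo_dist (A0 : {A : Finset α // A ∈ F})
    (c : {A : Finset α // A ∈ F} → {A : Finset α // A ∈ F})
    (hc2 : ∀ A, A ≠ A0 →
      (oneInclusion F).dist (c A) A0 + 1 = (oneInclusion F).dist A A0)
    {A B : {A : Finset α // A ∈ F}} (h : orbTo A0 c A B) :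
    (oneInclusion F).dist B A0 ≤ (oneInclusion F).dist A A0 := by
  induction h with
  | refl => exact le_refl _
  | tail h1 h2 ih =>
    obtain ⟨hne, rfl⟩ := h2
    have := hc2 _ hne
    omega

lemma orbTo_chain (A0 : {A : Finset α // A ∈ F})
    (c : {A : Finset α // A ∈ F} → {A : Finset α // A ∈ F})
    {B P : {A : Finset α // A ∈ F}} (h : orbTo A0 c B P) :
    ∀ Q, orbTo A0 c B Q → (orbTo A0 c P Q ∨ orbTo A0 c Q P) := by
  induction h using Relation.ReflTransGen.head_induction_on with
  | refl => exact fun Q hq => Or.inl hq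
  | head hstep hrest ih =>
    intro Q hq
    rcases Relation.ReflTransGen.cases_head hq with heq | ⟨B'', hrel, h2⟩
    · exact heq ▸ Or.inr (Relation.ReflTransGen.head hstep hrest)
    · have hB'' : B'' = _ := hrel.2.trans hstep.2.symm
      exact ih Q (hB'' ▸ h2)

lemma orbit_flip (A0 : {A : Finset α // A ∈ F})
    (c : {A : Finset α // A ∈ F} → {A : Finset α // A ∈ F})
    (hc1 : ∀ A, A ≠ A0 → (symmDiff A.1 (c A).1).card = 1)
    (hc2 : ∀ A, A ≠ A0 →
      (oneInclusion F).dist (c A) A0 + 1 = (oneInclusion F).dist A A0)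
    {x : α} {Ax : {A : Finset α // A ∈ F}} (hAx : Ax ≠ A0)
    (hDAx : symmDiff Ax.1 (c Ax).1 = {x})
    (huniq : ∀ B, B ≠ A0 → symmDiff B.1 (c B).1 = {x} → B = Ax) :
    ∀ A, ((x ∈ A.1 ↔ x ∈ A0.1) ↔ ¬ orbTo A0 c A Ax) := by
  suffices H : ∀ n A, (oneInclusion F).dist A A0 = n →
      ((x ∈ A.1 ↔ x ∈ A0.1) ↔ ¬ orbTo A0 c A Ax) by
    exact fun A => H _ A rfl
  intro n
  induction n using Nat.strong_induction_on with
  | _ n ih =>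
    intro A hdist
    by_cases hA : A = A0
    · rw [hA]
      have hno : ¬ orbTo A0 c A0 Ax := by
        intro h
        rcases Relation.ReflTransGen.cases_head h with heq | ⟨B, hrel, _⟩
        · exact hAx heq.symm
        · exact hrel.1 rfl
      simp [hno]
    · have hc2' := hc2 A hA
      obtain ⟨z, hz⟩ := Finset.card_eq_one.mp (hc1 A hA)
      have ihC : (x ∈ (c A).1 ↔ x ∈ A0.1) ↔ ¬ orbTo A0 c (c A) Ax := by
        apply ih ((oneInclusion F).dist (c A) A0) (by omega) (c A) rfl
      by_cases hzx : z = x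
      · subst hzx
        have hAAx : A = Ax := huniq A hA hz
        have horb : orbTo A0 c A Ax := hAAx ▸ Relation.ReflTransGen.refl
        have hnC : ¬ orbTo A0 c (c A) Ax := by
          intro h
          have hd := orbTo_dist A0 c hc2 h
          rw [← hAAx] at hd
          omega
        have hxs : z ∈ symmDiff A.1 (c A).1 := hz ▸ Finset.mem_singleton_self z
        rw [Finset.mem_symmDiff] at hxs
        have h1 : z ∈ (c A).1 ↔ z ∈ A0.1 := ihC.mpr hnC
        simp only [horb, not_true, iff_false]
        tauto
      · have hxns : x ∉ symmDiff A.1 (c A).1 := by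
          rw [hz, Finset.mem_singleton]
          exact fun h => hzx h.symm
        rw [Finset.mem_symmDiff] at hxns
        have hAC : x ∈ A.1 ↔ x ∈ (c A).1 := by tauto
        have hAnAx : A ≠ Ax := by
          rintro rfl
          rw [hDAx] at hz
          exact hzx (Finset.singleton_injective hz.symm)
        have horbiff : orbTo A0 c A Ax ↔ orbTo A0 c (c A) Ax := by
          constructor
          · intro h
            rcases Relation.ReflTransGen.cases_head h with heq | ⟨B, hrel, h2⟩
            · exact absurd heq hAnAx
            · rwa [← hrel.2]
          · intro h
            exact Relation.ReflTransGen.head ⟨hA, rfl⟩ h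
        rw [hAC, ihC, horbiff]

variable [Fintype α]

lemma vc_le_one_of_inj (hwg : WellGraded F) (A0 : {A : Finset α // A ∈ F})
    (c : {A : Finset α // A ∈ F} → {A : Finset α // A ∈ F})
    (hc1 : ∀ A, A ≠ A0 → (symmDiff A.1 (c A).1).card = 1)
    (hc2 : ∀ A, A ≠ A0 →
      (oneInclusion F).dist (c A) A0 + 1 = (oneInclusion F).dist A A0)
    (hinj : ∀ A B, A ≠ A0 → B ≠ A0 →
      symmDiff A.1 (c A).1 = symmDiff B.1 (c B).1 → A = B) :
    vcDim F ≤ 1 := by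
  classical
  apply Finset.sup_le
  intro s hs
  by_contra hcard
  push_neg at hcard
  obtain ⟨x, hxs, y, hys, hxy⟩ := Finset.one_lt_card.mp hcard
  have hpair : ({x, y} : Finset α) ⊆ s := by
    intro a ha
    rw [Finset.mem_insert, Finset.mem_singleton] at ha
    rcases ha with rfl | rfl <;> assumption
  have hsh : F.Shatters {x, y} := (Finset.mem_shatterer.1 hs).mono_right hpair
  -- a helper producing members with prescribed traces on {x, y}
  have htrace : ∀ px py : Prop, ∃ A : {A : Finset α // A ∈ F},
      (x ∈ A.1 ↔ px) ∧ (y ∈ A.1 ↔ py) := by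
    intro px py
    classical
    set t : Finset α := (if px then {x} else ∅) ∪ (if py then {y} else ∅) with ht
    have hts : t ⊆ {x, y} := by
      intro a ha
      rw [ht, Finset.mem_union] at ha
      rw [Finset.mem_insert, Finset.mem_singleton]
      rcases ha with h | h
      · left; split_ifs at h with hh
        · exact Finset.mem_singleton.1 h
        · exact absurd h (Finset.notMem_empty a)
      · right; split_ifs at h with hh
        · exact Finset.mem_singleton.1 h
        · exact absurd h (Finset.notMem_empty a)
    obtain ⟨u, hu, he⟩ := hsh hts
    have hxt : x ∈ t ↔ px := by
      rw [ht, Finset.mem_union]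
      constructor
      · rintro (h | h) <;> split_ifs at h with hh
        · exact hh
        · exact absurd h (Finset.notMem_empty x)
        · exact absurd (Finset.mem_singleton.1 h) hxy
        · exact absurd h (Finset.notMem_empty x)
      · intro h; left; rw [if_pos h]; exact Finset.mem_singleton_self x
    have hyt : y ∈ t ↔ py := by
      rw [ht, Finset.mem_union]
      constructor
      · rintro (h | h) <;> split_ifs at h with hh
        · exact absurd (Finset.mem_singleton.1 h) hxy.symm
        · exact absurd h (Finset.notMem_empty y)
        · exact hh
        · exact absurd h (Finset.notMem_empty y)
      · intro h; right; rw [if_pos h]; exact Finset.mem_singleton_self y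
    refine ⟨⟨u, hu⟩, ?_, ?_⟩
    · rw [← hxt, ← he, Finset.mem_inter]
      simp [Finset.mem_insert]
    · rw [← hyt, ← he, Finset.mem_inter]
      simp [Finset.mem_insert]
  -- x and y are essential
  have hx_ess : x ∈ essSet F := by
    obtain ⟨A1, h1, _⟩ := htrace True True
    obtain ⟨A2, h2, _⟩ := htrace False False
    simp only [essSet, Finset.mem_filter, Finset.mem_univ, true_and]
    exact ⟨⟨A1.1, A1.2, h1.mpr trivial⟩, ⟨A2.1, A2.2, fun h => h2.mp h⟩⟩
  have hy_ess : y ∈ essSet F := by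
    obtain ⟨A1, _, h1⟩ := htrace True True
    obtain ⟨A2, _, h2⟩ := htrace False False
    simp only [essSet, Finset.mem_filter, Finset.mem_univ, true_and]
    exact ⟨⟨A1.1, A1.2, h1.mpr trivial⟩, ⟨A2.1, A2.2, fun h => h2.mp h⟩⟩
  obtain ⟨Ax, hAxne, hDx⟩ := exists_label_edge hwg A0 c hc1 hc2 hx_ess
  obtain ⟨Ay, hAyne, hDy⟩ := exists_label_edge hwg A0 c hc1 hc2 hy_ess
  have hKx := orbit_flip A0 c hc1 hc2 hAxne hDx
    (fun B hB hDB => hinj B Ax hB hAxne (hDB.trans hDx.symm))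
  have hKy := orbit_flip A0 c hc1 hc2 hAyne hDy
    (fun B hB hDB => hinj B Ay hB hAyne (hDB.trans hDy.symm))
  -- member flipping both x and y
  obtain ⟨A1, hA1x, hA1y⟩ := htrace (x ∉ A0.1) (y ∉ A0.1)
  have horb1x : orbTo A0 c A1 Ax := by
    by_contra h
    have := (hKx A1).mpr h
    tauto
  have horb1y : orbTo A0 c A1 Ay := by
    by_contra h
    have := (hKy A1).mpr h
    tauto
  rcases orbTo_chain A0 c horb1x Ay horb1y with hxy' | hyx'
  · -- orbTo Ax Ay : contradiction with a member flipping x but not y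
    obtain ⟨A2, hA2x, hA2y⟩ := htrace (x ∉ A0.1) (y ∈ A0.1)
    have horb2x : orbTo A0 c A2 Ax := by
      by_contra h
      have := (hKx A2).mpr h
      tauto
    have hn2y : ¬ orbTo A0 c A2 Ay := (hKy A2).mp (by tauto)
    exact hn2y (horb2x.trans hxy')
  · obtain ⟨A3, hA3x, hA3y⟩ := htrace (x ∈ A0.1) (y ∉ A0.1)
    have horb3y : orbTo A0 c A3 Ay := by
      by_contra h
      have := (hKy A3).mpr h
      tauto
    have hn3x : ¬ orbTo A0 c A3 Ax := (hKx A3).mp (by tauto)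
    exact hn3x (horb3y.trans hyx')

end Aux4

section Final

variable {α : Type*} [DecidableEq α] [Fintype α] {F : Finset (Finset α)}

lemma inj_of_card (hwg : WellGraded F) (hF : F.Nonempty)
    (A0 : {A : Finset α // A ∈ F})
    (c : {A : Finset α // A ∈ F} → {A : Finset α // A ∈ F})
    (hc1 : ∀ A, A ≠ A0 → (symmDiff A.1 (c A).1).card = 1)
    (hc2 : ∀ A, A ≠ A0 →
      (oneInclusion F).dist (c A) A0 + 1 = (oneInclusion F).dist A A0)
    (hcard : F.card = (essSet F).card + 1) :
    ∀ A B, A ≠ A0 → B ≠ A0 →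
      symmDiff A.1 (c A).1 = symmDiff B.1 (c B).1 → A = B := by
  classical
  obtain ⟨g, hgp⟩ := g_exists hwg A0 c hc1 hc2
  have herase : (Finset.univ.erase A0).card = (essSet F).card := by
    rw [Finset.card_erase_of_mem (Finset.mem_univ _), Finset.card_univ, Fintype.card_coe]
    omega
  have hsurj := Finset.surj_on_of_inj_on_of_card_le
    (s := essSet F) (t := Finset.univ.erase A0)
    (fun x _ => g x)
    (fun x hx => Finset.mem_erase.2 ⟨(hgp x hx).1, Finset.mem_univ _⟩)
    (fun x y hx hy hxy => by
      replace hxy : g x = g y := hxy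
      have h1 := (hgp x hx).2
      have h2 := (hgp y hy).2
      rw [hxy, h2] at h1
      exact (Finset.singleton_injective h1).symm)
    (le_of_eq herase)
  intro A B hA hB hAB
  obtain ⟨xA, hxA, hAe⟩ := hsurj A (Finset.mem_erase.2 ⟨hA, Finset.mem_univ _⟩)
  obtain ⟨xB, hxB, hBe⟩ := hsurj B (Finset.mem_erase.2 ⟨hB, Finset.mem_univ _⟩)
  replace hAe : A = g xA := hAe
  replace hBe : B = g xB := hBe
  have hDA : symmDiff A.1 (c A).1 = {xA} := by rw [hAe]; exact (hgp xA hxA).2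
  have hDB : symmDiff B.1 (c B).1 = {xB} := by rw [hBe]; exact (hgp xB hxB).2
  have : xA = xB := by
    have := hDA.symm.trans (hAB.trans hDB)
    exact Finset.singleton_injective this
  rw [hAe, hBe, this]

theorem wellGraded_vcDim_le_one_iff_additionality_one' (hF : F.Nonempty) :
    (WellGraded F ∧ vcDim F ≤ 1) ↔
      (WellGraded F ∧ F.card = (essSet F).card + 1) := by
  classical
  obtain ⟨E0, hE0⟩ := hF
  set A0 : {A : Finset α // A ∈ F} := ⟨E0, hE0⟩ with hA0
  constructor
  · rintro ⟨hwg, hvc⟩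
    refine ⟨hwg, ?_⟩
    have hex : ∀ A : {A : Finset α // A ∈ F}, ∃ C, A ≠ A0 →
        ((symmDiff A.1 C.1).card = 1 ∧
          (oneInclusion F).dist C A0 + 1 = (oneInclusion F).dist A A0) := by
      intro A
      by_cases hA : A = A0
      · exact ⟨A, fun h => absurd hA h⟩
      · obtain ⟨C, h1, h2⟩ := exists_parent hwg A0 A hA
        exact ⟨C, fun _ => ⟨h1, h2⟩⟩
    choose c hc using hex
    have hc1 : ∀ A, A ≠ A0 → (symmDiff A.1 (c A).1).card = 1 := fun A hA => (hc A hA).1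
    have hc2 : ∀ A, A ≠ A0 →
        (oneInclusion F).dist (c A) A0 + 1 = (oneInclusion F).dist A A0 :=
      fun A hA => (hc A hA).2
    have hlow := card_lower hwg ⟨E0, hE0⟩ A0 c hc1 hc2
    have hupp := card_upper ⟨E0, hE0⟩ A0 c hc1 (inj_of_vc hvc A0 c hc1 hc2)
    omega
  · rintro ⟨hwg, hcard⟩
    refine ⟨hwg, ?_⟩
    have hex : ∀ A : {A : Finset α // A ∈ F}, ∃ C, A ≠ A0 →
        ((symmDiff A.1 C.1).card = 1 ∧
          (oneInclusion F).dist C A0 + 1 = (oneInclusion F).dist A A0) := by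
      intro A
      by_cases hA : A = A0
      · exact ⟨A, fun h => absurd hA h⟩
      · obtain ⟨C, h1, h2⟩ := exists_parent hwg A0 A hA
        exact ⟨C, fun _ => ⟨h1, h2⟩⟩
    choose c hc using hex
    have hc1 : ∀ A, A ≠ A0 → (symmDiff A.1 (c A).1).card = 1 := fun A hA => (hc A hA).1
    have hc2 : ∀ A, A ≠ A0 →
        (oneInclusion F).dist (c A) A0 + 1 = (oneInclusion F).dist A A0 :=
      fun A hA => (hc A hA).2
    exact vc_le_one_of_inj hwg A0 c hc1 hc2
      (inj_of_card hwg ⟨E0, hE0⟩ A0 c hc1 hc2 hcard)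

end Final

theorem wellGraded_vcDim_le_one_iff_additionality_one {α : Type*}
    [DecidableEq α] [Fintype α] (F : Finset (Finset α)) (hF : F.Nonempty) :
    (WellGraded F ∧ vcDim F ≤ 1) ↔
      (WellGraded F ∧ F.card = (essSet F).card + 1) := by
  exact wellGraded_vcDim_le_one_iff_additionality_one' hF
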